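/- Let 0 ≤ A ≤ I and Z > 0 with extremal eigenvalues a ≥ b > 0. Then AZA ≤ ((a+b)²/(4ab))·Z in the Loewner order. -/

import Mathlib

open Matrix ComplexOrder

namespace KantorovichAux

lemma eq_re {z : ℂ} (hz : 0 ≤ z) : z = (z.re : ℂ) := by
  obtain ⟨h1, h2⟩ := Complex.nonneg_iff.mp hz
  exact Complex.ext rfl (by simp [← h2])

lemma sub_sq_posSemidef {n : ℕ} {A : Matrix (Fin n) (Fin n) ℂ}
    (hA : A.PosSemidef) (hAI : ((1 : Matrix (Fin n) (Fin n) ℂ) - A).PosSemidef) :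
    (A - A * A).PosSemidef := by
  obtain ⟨B, hB1, hB2⟩ : ∃ B : Matrix (Fin n) (Fin n) ℂ, Bᴴ = B ∧ B * B = A :=
    by
      open scoped MatrixOrder in
      exact ⟨CFC.sqrt A, (CFC.sqrt_nonneg A).posSemidef.1, CFC.sqrt_mul_sqrt_self A hA.nonneg⟩
  have h := hAI.mul_mul_conjTranspose_same B
  rw [hB1] at h
  have key : B * (1 - A) * B = A - A * A := by rw [← hB2]; noncomm_ring
  rwa [key] at h

end KantorovichAux

namespace KantorovichAux

lemma kantorovich_matrix {n : ℕ} {Z : Matrix (Fin n) (Fin n) ℂ} (hZ : Z.PosDef)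
    {a b : ℝ} (hb0 : 0 < b)
    (hub : ∀ i, hZ.1.eigenvalues i ≤ a) (hlb : ∀ i, b ≤ hZ.1.eigenvalues i) :
    (((a + b : ℝ) : ℂ) • (1 : Matrix (Fin n) (Fin n) ℂ) - Z
      - ((a * b : ℝ) : ℂ) • Z⁻¹).PosSemidef := by
  set U : Matrix (Fin n) (Fin n) ℂ := (hZ.1.eigenvectorUnitary : Matrix (Fin n) (Fin n) ℂ) with hU
  set lam := hZ.1.eigenvalues with hlam
  have hlam0 : ∀ i, lam i ≠ 0 := fun i => (hb0.trans_le (hlb i)).ne'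
  have hUU : U * star U = 1 := Matrix.mem_unitaryGroup_iff.mp hZ.1.eigenvectorUnitary.2
  have hUU' : star U * U = 1 := Matrix.mem_unitaryGroup_iff'.mp hZ.1.eigenvectorUnitary.2
  have hspec : Z = U * diagonal (fun i => (lam i : ℂ)) * star U := hZ.1.spectral_theorem
  have hinv : Z⁻¹ = U * diagonal (fun i => ((lam i : ℝ)⁻¹ : ℂ)) * star U := by
    apply Matrix.inv_eq_right_inv
    rw [hspec]
    calc U * diagonal (fun i => (lam i : ℂ)) * star U *
          (U * diagonal (fun i => ((lam i : ℝ)⁻¹ : ℂ)) * star U)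
        = U * diagonal (fun i => (lam i : ℂ)) * (star U * U) *
            diagonal (fun i => ((lam i : ℝ)⁻¹ : ℂ)) * star U := by
          simp only [Matrix.mul_assoc]
      _ = U * (diagonal (fun i => (lam i : ℂ)) * diagonal (fun i => ((lam i : ℝ)⁻¹ : ℂ))) *
            star U := by rw [hUU']; simp only [Matrix.mul_assoc, Matrix.one_mul]
      _ = 1 := by
          rw [diagonal_mul_diagonal]
          have : (fun i => (lam i : ℂ) * ((lam i : ℝ)⁻¹ : ℂ)) = fun _ => (1 : ℂ) := by
            funext i
            rw [← Complex.ofReal_inv, ← Complex.ofReal_mul, mul_inv_cancel₀ (hlam0 i)]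
            simp
          rw [this, diagonal_one, Matrix.mul_one, hUU]
  have hEntry : ∀ i, (0 : ℂ) ≤ ((a + b - lam i - a * b * (lam i)⁻¹ : ℝ) : ℂ) := by
    intro i
    rw [Complex.zero_le_real]
    have hli : 0 < lam i := hb0.trans_le (hlb i)
    have h1 : a * b * (lam i)⁻¹ ≤ a + b - lam i := by
      rw [mul_inv_le_iff₀ hli]
      nlinarith [mul_nonneg (sub_nonneg.mpr (hub i)) (sub_nonneg.mpr (hlb i))]
    linarith
  have key : ((a + b : ℝ) : ℂ) • (1 : Matrix (Fin n) (Fin n) ℂ) - Z - ((a * b : ℝ) : ℂ) • Z⁻¹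
      = U * diagonal (fun i => ((a + b - lam i - a * b * (lam i)⁻¹ : ℝ) : ℂ)) * star U := by
    have hdiag : diagonal (fun i => ((a + b - lam i - a * b * (lam i)⁻¹ : ℝ) : ℂ))
        = ((a + b : ℝ) : ℂ) • (1 : Matrix (Fin n) (Fin n) ℂ)
          - diagonal (fun i => (lam i : ℂ))
          - ((a * b : ℝ) : ℂ) • diagonal (fun i => ((lam i : ℝ)⁻¹ : ℂ)) := by
      ext i j
      rcases eq_or_ne i j with rfl | h
      · simp only [diagonal_apply_eq, Matrix.sub_apply, Matrix.smul_apply,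
          Matrix.one_apply_eq, smul_eq_mul, mul_one]
        push_cast
        ring
      · simp [diagonal_apply_ne _ h, Matrix.one_apply_ne h]
    rw [hdiag, hinv, hspec]
    simp only [Matrix.mul_sub, Matrix.sub_mul, Matrix.mul_smul, Matrix.smul_mul,
      Matrix.mul_one, Matrix.one_mul, Matrix.mul_assoc, hUU]
  rw [key, Matrix.star_eq_conjTranspose]
  exact (PosSemidef.diagonal hEntry).mul_mul_conjTranspose_same U

end KantorovichAux

namespace KantorovichAux

lemma cs {n : ℕ} (u v : Fin n → ℂ) :
    ‖star u ⬝ᵥ v‖ ^ 2 ≤ (star u ⬝ᵥ u).re * (star v ⬝ᵥ v).re := by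
  set x : EuclideanSpace ℂ (Fin n) := (WithLp.equiv 2 (Fin n → ℂ)).symm u with hx
  set y : EuclideanSpace ℂ (Fin n) := (WithLp.equiv 2 (Fin n → ℂ)).symm v with hy
  have h := norm_inner_le_norm (𝕜 := ℂ) x y
  rw [hx, hy, WithLp.equiv_symm_apply, EuclideanSpace.inner_toLp_toLp, dotProduct_comm] at h
  have hu : (star u ⬝ᵥ u).re = ‖x‖ ^ 2 := by
    have := inner_self_eq_norm_sq (𝕜 := ℂ) x
    rw [hx, WithLp.equiv_symm_apply, EuclideanSpace.inner_toLp_toLp, dotProduct_comm] at this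
    simpa using this.symm ▸ rfl
  have hv : (star v ⬝ᵥ v).re = ‖y‖ ^ 2 := by
    have := inner_self_eq_norm_sq (𝕜 := ℂ) y
    rw [hy, WithLp.equiv_symm_apply, EuclideanSpace.inner_toLp_toLp, dotProduct_comm] at this
    simpa using this.symm ▸ rfl
  calc ‖star u ⬝ᵥ v‖ ^ 2 ≤ (‖x‖ * ‖y‖) ^ 2 :=
        pow_le_pow_left₀ (norm_nonneg _) h 2
    _ = (star u ⬝ᵥ u).re * (star v ⬝ᵥ v).re := by rw [hu, hv, mul_pow]

end KantorovichAux

open KantorovichAux in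
theorem AZA_le_kantorovich_Z {n : ℕ} (A Z : Matrix (Fin n) (Fin n) ℂ)
    (hA : A.PosSemidef) (hAI : ((1 : Matrix (Fin n) (Fin n) ℂ) - A).PosSemidef)
    (hZ : Z.PosDef) (a b : ℝ)
    (ha : IsGreatest (Set.range hZ.1.eigenvalues) a)
    (hb : IsLeast (Set.range hZ.1.eigenvalues) b) :
    ((((a + b) ^ 2 / (4 * a * b) : ℝ) : ℂ) • Z - A * Z * A).PosSemidef := by
  classical
  obtain ⟨i0, hi0⟩ := hb.1
  have hb0 : 0 < b := hi0 ▸ hZ.eigenvalues_pos i0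
  have hab : b ≤ a := hb.2 ha.1
  have ha0 : 0 < a := hb0.trans_le hab
  have hub : ∀ i, hZ.1.eigenvalues i ≤ a := fun i => ha.2 ⟨i, rfl⟩
  have hlb : ∀ i, b ≤ hZ.1.eigenvalues i := fun i => hb.2 ⟨i, rfl⟩
  have hZdet : IsUnit Z.det := hZ.det_pos.ne'.isUnit
  have hZZinv : Z * Z⁻¹ = 1 := Matrix.mul_nonsing_inv Z hZdet
  rw [posSemidef_iff_dotProduct_mulVec]
  constructor
  · have h1 : (A * Z * Aᴴ).IsHermitian := isHermitian_mul_mul_conjTranspose A hZ.1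
    rw [hA.1] at h1
    have h2 : ((((a + b) ^ 2 / (4 * a * b) : ℝ) : ℂ) • Z).IsHermitian := by
      rw [Matrix.IsHermitian, conjTranspose_smul, hZ.1.eq, Complex.star_def,
        Complex.conj_ofReal]
    exact h2.sub h1
  · intro x
    set y : Fin n → ℂ := A *ᵥ x with hy
    have hxA : star x ᵥ* A = star y := by rw [hy, star_mulVec, hA.1]
    have hScEq : star x ⬝ᵥ ((A * Z * A) *ᵥ x) = star y ⬝ᵥ (Z *ᵥ y) := by
      rw [← Matrix.mulVec_mulVec, ← Matrix.mulVec_mulVec, Matrix.dotProduct_mulVec _ A, hxA,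
        ← hy]
    have hNcEq : star x ⬝ᵥ ((A * A) *ᵥ x) = star y ⬝ᵥ y := by
      rw [← Matrix.mulVec_mulVec, Matrix.dotProduct_mulVec _ A, hxA, ← hy]
    have hScnn : 0 ≤ star y ⬝ᵥ (Z *ᵥ y) := hZ.posSemidef.dotProduct_mulVec_nonneg y
    have hTcnn : 0 ≤ star y ⬝ᵥ (Z⁻¹ *ᵥ y) := hZ.inv.posSemidef.dotProduct_mulVec_nonneg y
    have hRcnn : 0 ≤ star x ⬝ᵥ (Z *ᵥ x) := hZ.posSemidef.dotProduct_mulVec_nonneg x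
    have hNcnn : 0 ≤ star y ⬝ᵥ y := dotProduct_star_self_nonneg y
    have hPcnn : 0 ≤ star x ⬝ᵥ (A *ᵥ x) := hA.dotProduct_mulVec_nonneg x
    set S : ℝ := (star y ⬝ᵥ (Z *ᵥ y)).re with hS
    set T : ℝ := (star y ⬝ᵥ (Z⁻¹ *ᵥ y)).re with hT
    set R : ℝ := (star x ⬝ᵥ (Z *ᵥ x)).re with hR
    set N : ℝ := (star y ⬝ᵥ y).re with hN
    set P : ℝ := (star x ⬝ᵥ (A *ᵥ x)).re with hP
    have hS0 : 0 ≤ S := (Complex.nonneg_iff.mp hScnn).1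
    have hT0 : 0 ≤ T := (Complex.nonneg_iff.mp hTcnn).1
    have hR0 : 0 ≤ R := (Complex.nonneg_iff.mp hRcnn).1
    have hP0 : 0 ≤ P := (Complex.nonneg_iff.mp hPcnn).1
    -- (1) N ≤ P
    have hNP : N ≤ P := by
      have h := (sub_sq_posSemidef hA hAI).dotProduct_mulVec_nonneg x
      rw [Matrix.sub_mulVec, dotProduct_sub, hNcEq] at h
      have h2 := (Complex.nonneg_iff.mp h).1
      rw [Complex.sub_re] at h2
      linarith
    -- (2) S + a*b*T ≤ (a+b)*N
    have hKant : S + a * b * T ≤ (a + b) * N := by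
      have h := (kantorovich_matrix hZ hb0 hub hlb).dotProduct_mulVec_nonneg y
      rw [Matrix.sub_mulVec, Matrix.sub_mulVec, Matrix.smul_mulVec,
        Matrix.smul_mulVec, Matrix.one_mulVec, dotProduct_sub,
        dotProduct_sub, dotProduct_smul, dotProduct_smul,
        eq_re hScnn, eq_re hTcnn, eq_re hNcnn] at h
      have h2 : ((((a + b) * N - S - a * b * T : ℝ)) : ℂ)
          = ((a + b : ℝ) : ℂ) • ((N : ℝ) : ℂ) - ((S : ℝ) : ℂ)
            - ((a * b : ℝ) : ℂ) • ((T : ℝ) : ℂ) := by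
        push_cast [smul_eq_mul]
        ring
      rw [← h2, Complex.zero_le_real] at h
      linarith
    -- (3) P^2 ≤ R*T
    have hCS : P ^ 2 ≤ R * T := by
      obtain ⟨W, hW1, hW2⟩ : ∃ W : Matrix (Fin n) (Fin n) ℂ, Wᴴ = W ∧ W * W = Z :=
        by
          open scoped MatrixOrder in
          exact ⟨CFC.sqrt Z, (CFC.sqrt_nonneg Z).posSemidef.1,
            CFC.sqrt_mul_sqrt_self Z hZ.posSemidef.nonneg⟩
      have hkey : ∀ w w' : Fin n → ℂ,
          star (W *ᵥ w) ⬝ᵥ (W *ᵥ w') = star w ⬝ᵥ (Z *ᵥ w') := by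
        intro w w'
        rw [star_mulVec, hW1, ← Matrix.dotProduct_mulVec, Matrix.mulVec_mulVec, hW2]
      have hZinvy : Z *ᵥ (Z⁻¹ *ᵥ y) = y := by
        rw [Matrix.mulVec_mulVec, hZZinv, Matrix.one_mulVec]
      have e1 : star (W *ᵥ x) ⬝ᵥ (W *ᵥ (Z⁻¹ *ᵥ y)) = star x ⬝ᵥ (A *ᵥ x) := by
        rw [hkey, hZinvy, ← hy]
      have e2 : star (W *ᵥ x) ⬝ᵥ (W *ᵥ x) = star x ⬝ᵥ (Z *ᵥ x) := hkey x x
      have e3 : star (W *ᵥ (Z⁻¹ *ᵥ y)) ⬝ᵥ (W *ᵥ (Z⁻¹ *ᵥ y)) = star y ⬝ᵥ (Z⁻¹ *ᵥ y) := by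
        rw [hkey, hZinvy, star_mulVec, hZ.1.inv.eq, ← Matrix.dotProduct_mulVec]
      have h := cs (W *ᵥ x) (W *ᵥ (Z⁻¹ *ᵥ y))
      rw [e1, e2, e3, ← hR, ← hT] at h
      have hPle : P ≤ ‖star x ⬝ᵥ (A *ᵥ x)‖ := by
        rw [hP]
        exact Complex.re_le_norm _
      calc P ^ 2 ≤ ‖star x ⬝ᵥ (A *ᵥ x)‖ ^ 2 := pow_le_pow_left₀ hP0 hPle 2
        _ ≤ R * T := h
    -- assemble
    rw [Matrix.sub_mulVec, dotProduct_sub, Matrix.smul_mulVec,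
      dotProduct_smul, hScEq, eq_re hScnn, eq_re hRcnn, ← hS, ← hR]
    have hcoe : ((((a + b) ^ 2 / (4 * a * b)) * R - S : ℝ) : ℂ)
        = (((a + b) ^ 2 / (4 * a * b) : ℝ) : ℂ) • ((R : ℝ) : ℂ) - ((S : ℝ) : ℂ) := by
      push_cast [smul_eq_mul]
      ring
    rw [← hcoe, Complex.zero_le_real]
    -- real arithmetic
    set r : ℝ := Real.sqrt R with hr
    set t : ℝ := Real.sqrt T with ht
    have hr0 : 0 ≤ r := Real.sqrt_nonneg _
    have ht0 : 0 ≤ t := Real.sqrt_nonneg _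
    have hr2 : r ^ 2 = R := Real.sq_sqrt hR0
    have ht2 : t ^ 2 = T := Real.sq_sqrt hT0
    have hPrt : P ≤ r * t := by
      have h1 : P ^ 2 ≤ (r * t) ^ 2 := by rw [mul_pow, hr2, ht2]; exact hCS
      exact le_of_pow_le_pow_left₀ two_ne_zero (mul_nonneg hr0 ht0) h1
    have hstep : S ≤ (a + b) * (r * t) - a * b * t ^ 2 := by
      have h1 : (a + b) * N ≤ (a + b) * P :=
        mul_le_mul_of_nonneg_left hNP (by positivity)
      have h2 : (a + b) * P ≤ (a + b) * (r * t) :=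
        mul_le_mul_of_nonneg_left hPrt (by positivity)
      rw [ht2]
      linarith
    rw [sub_nonneg, ← hr2, div_mul_eq_mul_div, le_div_iff₀ (by positivity : (0:ℝ) < 4 * a * b)]
    nlinarith [hstep, sq_nonneg ((a + b) * r - 2 * (a * b) * t), mul_pos ha0 hb0, hS0, ht0, hr0,
      mul_le_mul_of_nonneg_left hstep (le_of_lt (mul_pos ha0 hb0))]
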